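/- For the Filter operator Op(X) = {x ∈ X | p x} and a row-selection predicate F(Y) = {y ∈ Y | y = t₀}, the pushed-down predicate G(X) = {x ∈ X | x = t₀ ∧ p x} satisfies Op(G(X)) = F(Op(X)) for all X, and G(X) is the minimal subset S ⊆ X with Op(S) ⊇ F(Op(X)) whenever F(Op(X)) is nonempty. -/
import Mathlib

/-- equivalent pushdown of a row-selection predicate through Filter,
and minimality of the pushed-down selection. -/
theorem stmt_5 {T : Type*} (p : T → Prop) (t₀ : T)
    (Op : Set T → Set T) (hOp : ∀ X : Set T, Op X = {x ∈ X | p x})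
    (F : Set T → Set T) (hFdef : ∀ Y : Set T, F Y = {y ∈ Y | y = t₀})
    (G : Set T → Set T) (hGdef : ∀ X : Set T, G X = {x ∈ X | x = t₀ ∧ p x}) :
    (∀ X : Set T, Op (G X) = F (Op X)) ∧
    (∀ X : Set T, (F (Op X)).Nonempty →
      G X ⊆ X ∧ F (Op X) ⊆ Op (G X) ∧
      ∀ S : Set T, S ⊆ X → F (Op X) ⊆ Op S → G X ⊆ S) := by
  have key : ∀ X : Set T, Op (G X) = F (Op X) := by
    intro X
    simp only [hOp, hGdef, hFdef]
    ext x
    constructor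
    · rintro ⟨⟨hx, he, hp⟩, _⟩; exact ⟨⟨hx, hp⟩, he⟩
    · rintro ⟨⟨hx, hp⟩, he⟩; exact ⟨⟨hx, he, hp⟩, hp⟩
  refine ⟨key, fun X _ => ⟨?_, (key X).ge, ?_⟩⟩
  · rw [hGdef]; exact fun x hx => hx.1
  · intro S hS hsub x hx
    rw [hGdef] at hx
    obtain ⟨hx, he, hp⟩ := hx
    have : x ∈ Op S := hsub (by rw [hFdef, hOp]; exact ⟨⟨hx, hp⟩, he⟩)
    rw [hOp] at this; exact this.1
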